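/- Let R be a ring with identity in which every two-sided ideal is principal as a left ideal and as a right ideal, and assume R is a domain (noncommutative principal ideal domain). Then any two two-sided ideals of R commute: AB = BA. -/

import Mathlib

open Pointwise

/-- The product of two two-sided ideals: the two-sided ideal generated by pointwise products. -/
def tmul {R : Type*} [Ring R] (A B : TwoSidedIdeal R) : TwoSidedIdeal R :=
  TwoSidedIdeal.span ((A : Set R) * (B : Set R))

/-- A CI-ring is a ring in which any two two-sided ideals commute. -/
def IsCIRing (R : Type*) [Ring R] : Prop :=
  ∀ A B : TwoSidedIdeal R, tmul A B = tmul B A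

section PidCiAux

open MulOpposite
set_option linter.unusedSectionVars false

variable {R : Type*} [Ring R] [IsDomain R]


theorem pc_one_comm {w t : R} (h : w * t = 1) : t * w = 1 := by
  have h2 : (t * w) * (t * w) = t * w := by
    calc (t*w)*(t*w) = t * (w*t) * w := by noncomm_ring
    _ = t * w := by rw [h]; noncomm_ring
  have h3 : (t*w) * (t*w - 1) = 0 := by rw [mul_sub, h2, mul_one, sub_self]
  rcases mul_eq_zero.mp h3 with h4 | h4
  · exfalso
    have : (1 : R) = 0 := by
      calc (1:R) = (w*t) * (w*t) := by rw [h, one_mul]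
      _ = w * ((t*w) * t) := by noncomm_ring
      _ = 0 := by rw [h4, zero_mul, mul_zero]
    exact one_ne_zero this
  · linear_combination (norm := noncomm_ring) h4

theorem pc_unit_of_right {q r : R} (h : q * r = 1) : IsUnit q :=
  ⟨⟨q, r, h, pc_one_comm h⟩, rfl⟩

/-- An invariant element: `aR = Ra`. -/
def pc_Inv (a : R) : Prop := ∀ r : R, (∃ s, r * a = a * s) ∧ (∃ s, a * r = s * a)

omit [IsDomain R] in
theorem pc_inv_zero : pc_Inv (0 : R) := fun _ => ⟨⟨0, by simp⟩, ⟨0, by simp⟩⟩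

/-- `∩ₙ qⁿR = 0` for a nonzero nonunit `q`. -/
theorem pc_pow_cap (hl : ∀ I : Ideal R, I.IsPrincipal) {q : R} (hqu : ¬ IsUnit q)
    (hq0 : q ≠ 0) : ∀ x : R, (∀ n : ℕ, ∃ t, x = q ^ n * t) → x = 0 := by
  haveI : IsPrincipalIdealRing R := ⟨hl⟩
  intro x hx
  by_contra hx0
  choose t ht using hx
  have hstep : ∀ n, t n = q * t (n+1) := by
    intro n
    apply mul_left_cancel₀ (pow_ne_zero n hq0)
    rw [← ht n, ← mul_assoc, ← pow_succ, ← ht]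
  have hmono : Monotone (fun n => Ideal.span ({t n} : Set R)) := by
    apply monotone_nat_of_le_succ
    intro n
    rw [Ideal.span_le]
    intro y hy
    rw [Set.mem_singleton_iff] at hy
    subst hy
    exact Submodule.mem_span_singleton.mpr ⟨q, by rw [smul_eq_mul]; exact (hstep n).symm⟩
  obtain ⟨n, hn⟩ := monotone_stabilizes_iff_noetherian.mpr inferInstance
    ⟨fun n => Ideal.span ({t n} : Set R), hmono⟩
  have hmem : t (n+1) ∈ Ideal.span ({t n} : Set R) := by
    have := hn (n+1) (Nat.le_succ n)
    simp only [OrderHom.coe_mk] at this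
    rw [this]
    exact Submodule.mem_span_singleton_self _
  obtain ⟨r, hr⟩ := Submodule.mem_span_singleton.mp hmem
  rw [smul_eq_mul] at hr
  have ht0 : t (n+1) ≠ 0 := by
    intro h
    exact hx0 (by rw [ht (n+1), h, mul_zero])
  have h1 : (r * q - 1) * t (n+1) = 0 := by
    rw [sub_mul, one_mul, mul_assoc, ← hstep, hr, sub_self]
  rcases mul_eq_zero.mp h1 with h2 | h2
  · have : r * q = 1 := by linear_combination (norm := noncomm_ring) h2
    exact hqu (pc_unit_of_right (pc_one_comm this))
  · exact ht0 h2

/-- Every two-sided ideal has an invariant generator. -/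
theorem pc_gen (hl : ∀ I : Ideal R, I.IsPrincipal) (hr : ∀ I : Ideal Rᵐᵒᵖ, I.IsPrincipal)
    (M : TwoSidedIdeal R) : ∃ a : R, pc_Inv a ∧ ∀ x, x ∈ M ↔ ∃ r, x = a * r := by
  obtain ⟨g, hg⟩ := (hr (TwoSidedIdeal.asIdealOpposite M)).principal
  set a := unop g with ha
  have memiff : ∀ x, x ∈ M ↔ ∃ r, x = a * r := by
    intro x
    have h1 : x ∈ M ↔ op x ∈ TwoSidedIdeal.asIdealOpposite M := by
      rw [TwoSidedIdeal.mem_asIdealOpposite, unop_op]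
    rw [h1, hg, Submodule.mem_span_singleton]
    constructor
    · rintro ⟨c, hc⟩
      refine ⟨unop c, ?_⟩
      have : op x = op (a * unop c) := by
        rw [← hc, smul_eq_mul]
        rfl
      exact op_injective this
    · rintro ⟨r, hrr⟩
      exact ⟨op r, by rw [smul_eq_mul, hrr]; rfl⟩
  obtain ⟨b, hb⟩ := (hl (TwoSidedIdeal.asIdeal M)).principal
  have leftiff : ∀ x, x ∈ M ↔ ∃ c, x = c * b := by
    intro x
    rw [← TwoSidedIdeal.mem_asIdeal, hb, Submodule.mem_span_singleton]
    constructor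
    · rintro ⟨c, hc⟩; exact ⟨c, by rw [← hc, smul_eq_mul]⟩
    · rintro ⟨c, hc⟩; exact ⟨c, by rw [smul_eq_mul, hc]⟩
  have haM : a ∈ M := (memiff a).mpr ⟨1, (mul_one a).symm⟩
  by_cases haz : a = 0
  · refine ⟨a, ?_, memiff⟩
    rw [haz]; exact pc_inv_zero
  · refine ⟨a, fun r => ⟨?_, ?_⟩, memiff⟩
    · exact (memiff (r * a)).mp (M.mul_mem_left r a haM)
    · -- a * r = s * a
      have hbM : b ∈ M := (leftiff b).mpr ⟨1, (one_mul b).symm⟩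
      obtain ⟨t, hbt⟩ := (memiff b).mp hbM
      obtain ⟨u, hau⟩ := (leftiff a).mp haM
      obtain ⟨w, huw⟩ := (memiff (u * a)).mp (M.mul_mem_left u a haM)
      have hwt : w * t = 1 := by
        apply mul_left_cancel₀ haz
        rw [mul_one]
        calc a * (w * t) = (a * w) * t := by rw [mul_assoc]
        _ = (u * a) * t := by rw [huw]
        _ = u * (a * t) := by rw [mul_assoc]
        _ = u * b := by rw [← hbt]
        _ = a := hau.symm
      have ht0 : t ≠ 0 := by
        intro h
        rw [h, mul_zero] at hwt
        exact one_ne_zero hwt.symm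
      have hmem2 : a * (r * t) ∈ M := M.mul_mem_right a (r * t) haM
      obtain ⟨s, hs⟩ := (leftiff _).mp hmem2
      refine ⟨s, mul_right_cancel₀ ht0 ?_⟩
      calc a * r * t = a * (r * t) := by rw [mul_assoc]
      _ = s * b := hs
      _ = s * (a * t) := by rw [← hbt]
      _ = s * a * t := by rw [mul_assoc]

omit [IsDomain R] in
theorem pc_inv_mul {a b : R} (ha : pc_Inv a) (hb : pc_Inv b) : pc_Inv (a * b) := by
  intro r
  constructor
  · obtain ⟨r₁, h1⟩ := (ha r).1
    obtain ⟨r₂, h2⟩ := (hb r₁).1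
    exact ⟨r₂, by rw [← mul_assoc, h1, mul_assoc, h2, ← mul_assoc]⟩
  · obtain ⟨s, h1⟩ := (hb r).2
    obtain ⟨s₁, h2⟩ := (ha s).2
    exact ⟨s₁, by rw [mul_assoc, h1, ← mul_assoc, h2, mul_assoc]⟩

/-- The two-sided ideal `aR` for an invariant `a`. -/
def pc_rid (a : R) (ha : pc_Inv a) : TwoSidedIdeal R :=
  TwoSidedIdeal.mk' {x | ∃ r, x = a * r}
    ⟨0, (mul_zero a).symm⟩
    (fun {x y} hx hy => by
      obtain ⟨r, hr⟩ := hx; obtain ⟨s, hs⟩ := hy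
      exact ⟨r + s, by rw [hr, hs, mul_add]⟩)
    (fun {x} hx => by
      obtain ⟨r, hr⟩ := hx
      exact ⟨-r, by rw [hr, mul_neg]⟩)
    (fun {x y} hy => by
      obtain ⟨r, hr⟩ := hy
      obtain ⟨s, hs⟩ := (ha x).1
      exact ⟨s * r, by rw [hr, ← mul_assoc, hs, mul_assoc]⟩)
    (fun {x y} hx => by
      obtain ⟨r, hr⟩ := hx
      exact ⟨r * y, by rw [hr, mul_assoc]⟩)

theorem pc_mem_rid {a : R} (ha : pc_Inv a) {x : R} :
    x ∈ pc_rid a ha ↔ ∃ r, x = a * r :=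
  TwoSidedIdeal.mem_mk' _ _ _ _ _ _ x

/-- An atom: invariant, nonzero, nonunit, and `pR` is a maximal two-sided ideal. -/
def pc_Atom (p : R) : Prop :=
  pc_Inv p ∧ p ≠ 0 ∧ ¬ IsUnit p ∧
    ∀ J : TwoSidedIdeal R, (∀ r, p * r ∈ J) → (∀ x ∈ J, ∃ r, x = p * r) ∨ J = ⊤

/-- Comaximality of distinct atoms. -/
theorem pc_comax {p q : R} (hp : pc_Atom p) (hq : pc_Atom q)
    (hpq : ¬ ∃ r, p = q * r) : ∃ s t, p * s + q * t = 1 := by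
  let J : TwoSidedIdeal R :=
    TwoSidedIdeal.mk' {x | ∃ s t, x = p * s + q * t}
      ⟨0, 0, by simp⟩
      (fun {x y} hx hy => by
        obtain ⟨s, t, hst⟩ := hx; obtain ⟨s', t', hst'⟩ := hy
        refine ⟨s + s', t + t', ?_⟩
        rw [hst, hst', mul_add, mul_add]
        abel)
      (fun {x} hx => by
        obtain ⟨s, t, hst⟩ := hx
        exact ⟨-s, -t, by rw [hst, mul_neg, mul_neg, neg_add]⟩)
      (fun {x y} hy => by
        obtain ⟨s, t, hst⟩ := hy
        obtain ⟨x₁, hx1⟩ := (hp.1 x).1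
        obtain ⟨x₂, hx2⟩ := (hq.1 x).1
        refine ⟨x₁ * s, x₂ * t, ?_⟩
        rw [hst, mul_add, ← mul_assoc, ← mul_assoc, hx1, hx2, mul_assoc, mul_assoc])
      (fun {x y} hx => by
        obtain ⟨s, t, hst⟩ := hx
        exact ⟨s * y, t * y, by rw [hst, add_mul, mul_assoc, mul_assoc]⟩)
  have hmemJ : ∀ x, x ∈ J ↔ ∃ s t, x = p * s + q * t :=
    fun x => TwoSidedIdeal.mem_mk' _ _ _ _ _ _ x
  rcases hq.2.2.2 J (fun r => (hmemJ _).mpr ⟨0, r, by simp⟩) with h | h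
  · exfalso
    obtain ⟨r, hrr⟩ := h p ((hmemJ p).mpr ⟨1, 0, by simp⟩)
    exact hpq ⟨r, hrr⟩
  · have h1 : (1 : R) ∈ J := by rw [h]; trivial
    obtain ⟨s, t, hst⟩ := (hmemJ 1).mp h1
    exact ⟨s, t, hst.symm⟩

/-- If `x ∈ pR ∩ qR` with `p, q` comaximal, then `x ∈ pqR`. -/
theorem pc_cap_sub {p q : R} (hp : pc_Inv p) (hq : pc_Inv q)
    (hc : ∃ s t, p * s + q * t = 1) :
    ∀ x : R, (∃ r, x = p * r) → (∃ r, x = q * r) → ∃ r, x = p * (q * r) := by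
  obtain ⟨s, t, hst⟩ := hc
  rintro x ⟨x₁, hx1⟩ ⟨x₂, hx2⟩
  obtain ⟨s₁, hs1⟩ := (hp s).2          -- p * s = s₁ * p
  obtain ⟨s₂, hs2⟩ := (hq s₁).1         -- s₁ * q = q * s₂
  refine ⟨s₂ * x₂ + t * x₁, ?_⟩
  have key : x₁ = q * (s₂ * x₂ + t * x₁) := by
    calc x₁ = 1 * x₁ := (one_mul x₁).symm
    _ = (p * s + q * t) * x₁ := by rw [hst]
    _ = p * s * x₁ + q * (t * x₁) := by rw [add_mul, mul_assoc q t x₁]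
    _ = s₁ * (p * x₁) + q * (t * x₁) := by rw [hs1, mul_assoc]
    _ = s₁ * (q * x₂) + q * (t * x₁) := by rw [← hx1, hx2]
    _ = q * (s₂ * x₂) + q * (t * x₁) := by rw [← mul_assoc, hs2, mul_assoc]
    _ = q * (s₂ * x₂ + t * x₁) := by rw [mul_add]
  rw [hx1, ← key]

/-- Associate-case of atom commutation: if `q = p * w`. -/
theorem pc_atom_comm_assoc {p q : R} (hp : pc_Atom p) (hq : pc_Atom q)
    (h : ∃ w, q = p * w) : ∀ x, (∃ r, x = p * q * r) ↔ (∃ r, x = q * p * r) := by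
  obtain ⟨w, hw⟩ := h
  -- q's maximality applied to pR
  have hJ : ∀ r, q * r ∈ pc_rid p hp.1 := fun r =>
    (pc_mem_rid hp.1).mpr ⟨w * r, by rw [hw, mul_assoc]⟩
  rcases hq.2.2.2 (pc_rid p hp.1) hJ with hcase | hcase
  case inr =>
    exfalso
    have h1 : (1 : R) ∈ pc_rid p hp.1 := by rw [hcase]; trivial
    obtain ⟨r, hrr⟩ := (pc_mem_rid hp.1).mp h1
    exact hp.2.2.1 (pc_unit_of_right hrr.symm)
  case inl =>
  obtain ⟨v, hv⟩ := hcase p ((pc_mem_rid hp.1).mpr ⟨1, (mul_one p).symm⟩)  -- p = q * v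
  have hp0 := hp.2.1
  have hwv : w * v = 1 := by
    apply mul_left_cancel₀ hp0
    rw [mul_one, ← mul_assoc, ← hw, ← hv]
  have hvw : v * w = 1 := pc_one_comm hwv
  obtain ⟨w₂, hw2⟩ := (hp.1 w).1   -- w * p = p * w₂
  obtain ⟨v₂, hv2⟩ := (hp.1 v).1   -- v * p = p * v₂
  have hv2w2 : v₂ * w₂ = 1 := by
    apply mul_left_cancel₀ hp0
    rw [mul_one]
    calc p * (v₂ * w₂) = (p * v₂) * w₂ := by rw [mul_assoc]
    _ = (v * p) * w₂ := by rw [hv2]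
    _ = v * (p * w₂) := by rw [mul_assoc]
    _ = v * (w * p) := by rw [hw2]
    _ = (v * w) * p := by rw [mul_assoc]
    _ = p := by rw [hvw, one_mul]
  have hw2v2 : w₂ * v₂ = 1 := pc_one_comm hv2w2
  have hpq : p * q = p * p * (w) := by rw [hw, mul_assoc]
  have hqp : q * p = p * p * w₂ := by
    rw [hw, mul_assoc, hw2, ← mul_assoc]
  intro x
  constructor
  · rintro ⟨r, hrr⟩
    refine ⟨v₂ * (w * r), ?_⟩
    rw [hqp, mul_assoc, ← mul_assoc w₂ v₂ _, hw2v2, one_mul, ← mul_assoc, ← hpq]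
    exact hrr
  · rintro ⟨r, hrr⟩
    refine ⟨v * (w₂ * r), ?_⟩
    rw [hpq, mul_assoc, ← mul_assoc w v _, hwv, one_mul, ← mul_assoc, ← hqp]
    exact hrr

/-- Atoms commute: `pqR = qpR`. -/
theorem pc_atom_comm {p q : R} (hp : pc_Atom p) (hq : pc_Atom q) :
    ∀ x, (∃ r, x = p * q * r) ↔ (∃ r, x = q * p * r) := by
  by_cases h1 : ∃ w, q = p * w
  · exact pc_atom_comm_assoc hp hq h1
  by_cases h2 : ∃ w, p = q * w
  · intro x
    exact (pc_atom_comm_assoc hq hp h2 x).symm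
  have hc : ∃ s t, p * s + q * t = 1 := pc_comax hp hq h2
  have hc' : ∃ s t, q * s + p * t = 1 := by
    obtain ⟨s, t, hst⟩ := hc
    exact ⟨t, s, by rw [add_comm, hst]⟩
  intro x
  constructor
  · rintro ⟨r, hrr⟩
    -- x ∈ pR and x ∈ qR, hence x ∈ qpR
    have hxp : ∃ c, x = p * c := ⟨q * r, by rw [hrr, mul_assoc]⟩
    have hxq : ∃ c, x = q * c := by
      obtain ⟨p₁, hp1⟩ := (hq.1 p).1   -- p * q = q * p₁
      exact ⟨p₁ * r, by rw [hrr, mul_assoc, ← mul_assoc p q r, hp1, mul_assoc]⟩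
    obtain ⟨c, hcc⟩ := pc_cap_sub hq.1 hp.1 hc' x hxq hxp
    exact ⟨c, by rw [hcc, mul_assoc]⟩
  · rintro ⟨r, hrr⟩
    have hxq : ∃ c, x = q * c := ⟨p * r, by rw [hrr, mul_assoc]⟩
    have hxp : ∃ c, x = p * c := by
      obtain ⟨q₁, hq1⟩ := (hp.1 q).1   -- q * p = p * q₁
      exact ⟨q₁ * r, by rw [hrr, mul_assoc, ← mul_assoc q p r, hq1, mul_assoc]⟩
    obtain ⟨c, hcc⟩ := pc_cap_sub hp.1 hq.1 hc x hxp hxq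
    exact ⟨c, by rw [hcc, mul_assoc]⟩

/-- Peel a maximal invariant factor off a nonzero nonunit invariant element. -/
theorem pc_peel (hl : ∀ I : Ideal R, I.IsPrincipal) (hr : ∀ I : Ideal Rᵐᵒᵖ, I.IsPrincipal)
    {b : R} (hb : pc_Inv b) (hb0 : b ≠ 0) (hbu : ¬ IsUnit b) :
    ∃ p b₁, pc_Atom p ∧ pc_Inv b₁ ∧ b = p * b₁ ∧ ¬ ∃ r, b₁ = b * r := by
  haveI : IsPrincipalIdealRing R := ⟨hl⟩
  set B := pc_rid b hb with hBdef
  have hbB : b ∈ B := (pc_mem_rid hb).mpr ⟨1, (mul_one b).symm⟩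
  have hBtop : B ≠ ⊤ := by
    intro h
    have h1 : (1 : R) ∈ B := by rw [h]; trivial
    obtain ⟨r, hrr⟩ := (pc_mem_rid hb).mp h1
    exact hbu (pc_unit_of_right hrr.symm)
  -- well-foundedness
  have wfI : WellFounded ((· > ·) : Ideal R → Ideal R → Prop) :=
    (inferInstance : WellFoundedGT (Ideal R)).wf
  have wfT : WellFounded (fun I J : TwoSidedIdeal R =>
      TwoSidedIdeal.asIdeal J < TwoSidedIdeal.asIdeal I) := InvImage.wf _ wfI
  obtain ⟨M, hMS, hMmax⟩ := wfT.has_min {I : TwoSidedIdeal R | B ≤ I ∧ I ≠ ⊤}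
    ⟨B, le_refl B, hBtop⟩
  obtain ⟨p, hpInv, hpmem⟩ := pc_gen hl hr M
  have hbM : b ∈ M := hMS.1 hbB
  obtain ⟨b₁, hb1⟩ := (hpmem _).mp hbM
  have hp0 : p ≠ 0 := by
    intro h
    rw [h, zero_mul] at hb1
    exact hb0 hb1
  have hpu : ¬ IsUnit p := by
    intro h
    obtain ⟨u, hu⟩ := h
    have h1 : (1 : R) ∈ M := (hpmem _).mpr ⟨↑u⁻¹, by rw [← hu, Units.mul_inv]⟩
    exact hMS.2 (TwoSidedIdeal.one_mem_iff M |>.mp h1)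
  -- maximality
  have hmax : ∀ J : TwoSidedIdeal R, (∀ r, p * r ∈ J) →
      (∀ x ∈ J, ∃ r, x = p * r) ∨ J = ⊤ := by
    intro J hJ
    have hMJ : M ≤ J := by
      intro x hx
      obtain ⟨r, hrr⟩ := (hpmem _).mp hx
      rw [hrr]
      exact hJ r
    by_cases hJT : J = ⊤
    · exact Or.inr hJT
    · left
      have hJS : J ∈ {I : TwoSidedIdeal R | B ≤ I ∧ I ≠ ⊤} := ⟨le_trans hMS.1 hMJ, hJT⟩
      have hmono : TwoSidedIdeal.asIdeal M ≤ TwoSidedIdeal.asIdeal J :=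
        TwoSidedIdeal.asIdeal.monotone hMJ
      have heq : TwoSidedIdeal.asIdeal M = TwoSidedIdeal.asIdeal J := by
        rcases eq_or_lt_of_le hmono with h | h
        · exact h
        · exact absurd h (hMmax J hJS)
      intro x hx
      refine (hpmem _).mp ?_
      have : x ∈ TwoSidedIdeal.asIdeal J := TwoSidedIdeal.mem_asIdeal.mpr hx
      rw [← heq] at this
      exact TwoSidedIdeal.mem_asIdeal.mp this
  -- invariance of b₁
  have hb₁Inv : pc_Inv b₁ := by
    intro r
    constructor
    · -- r * b₁ = b₁ * s
      obtain ⟨r₅, hr5⟩ := (hpInv r).2      -- p * r = r₅ * p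
      obtain ⟨r₆, hr6⟩ := (hb r₅).1        -- r₅ * b = b * r₆
      refine ⟨r₆, mul_left_cancel₀ hp0 ?_⟩
      calc p * (r * b₁) = (p * r) * b₁ := by rw [mul_assoc]
      _ = r₅ * (p * b₁) := by rw [hr5, mul_assoc]
      _ = r₅ * b := by rw [← hb1]
      _ = b * r₆ := hr6
      _ = p * (b₁ * r₆) := by rw [hb1, mul_assoc]
    · -- b₁ * r = s * b₁
      obtain ⟨s₂, hs2⟩ := (hb r).2         -- b * r = s₂ * b
      obtain ⟨s₄, hs4⟩ := (hpInv s₂).1     -- s₂ * p = p * s₄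
      refine ⟨s₄, mul_left_cancel₀ hp0 ?_⟩
      calc p * (b₁ * r) = (p * b₁) * r := by rw [mul_assoc]
      _ = b * r := by rw [← hb1]
      _ = s₂ * b := hs2
      _ = s₂ * p * b₁ := by rw [hb1, mul_assoc]
      _ = p * (s₄ * b₁) := by rw [hs4, mul_assoc]
  -- strictness
  have hstrict : ¬ ∃ r, b₁ = b * r := by
    rintro ⟨c, hc⟩
    have hiter : ∀ n : ℕ, ∃ t, b = p ^ n * t := by
      intro n
      induction n with
      | zero => exact ⟨b, by rw [pow_zero, one_mul]⟩
      | succ n ih =>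
        obtain ⟨t, ht⟩ := ih
        refine ⟨t * c, ?_⟩
        calc b = p * b₁ := hb1
        _ = p * (b * c) := by rw [← hc]
        _ = p * ((p ^ n * t) * c) := by rw [← ht]
        _ = p ^ (n+1) * (t * c) := by rw [pow_succ', mul_assoc, mul_assoc]
    exact hb0 (pc_pow_cap hl hpu hp0 b hiter)
  exact ⟨p, b₁, ⟨hpInv, hp0, hpu, hmax⟩, hb₁Inv, hb1, hstrict⟩

/-- The right ideal `bR`, as a left ideal of the opposite ring. -/
def pc_ridOp (b : R) : Ideal Rᵐᵒᵖ := Ideal.span {op b}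

omit [IsDomain R] in
theorem pc_mem_ridOp {b x : R} : op x ∈ pc_ridOp b ↔ ∃ r, x = b * r := by
  rw [pc_ridOp, Ideal.span, Submodule.mem_span_singleton]
  constructor
  · rintro ⟨c, hc⟩
    refine ⟨unop c, op_injective ?_⟩
    rw [← hc, smul_eq_mul]
    rfl
  · rintro ⟨r, hrr⟩
    exact ⟨op r, by rw [smul_eq_mul, hrr]; rfl⟩

omit [IsDomain R] in
theorem pc_rel_of_peel {p b b₁ : R} (hb₁ : pc_Inv b₁) (hfac : b = p * b₁)
    (hstrict : ¬ ∃ r, b₁ = b * r) : pc_ridOp b < pc_ridOp b₁ := by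
  have hle : pc_ridOp b ≤ pc_ridOp b₁ := by
    rw [pc_ridOp, Ideal.span, Submodule.span_le, Set.singleton_subset_iff]
    obtain ⟨s, hs⟩ := (hb₁ p).1
    exact pc_mem_ridOp.mpr ⟨s, by rw [hfac, hs]⟩
  refine lt_of_le_of_ne hle ?_
  intro heq
  have : op b₁ ∈ pc_ridOp b := by
    rw [heq]
    exact pc_mem_ridOp.mpr ⟨1, (mul_one b₁).symm⟩
  exact hstrict (pc_mem_ridOp.mp this)

/-- An atom commutes with every invariant element: `pbR = bpR`. -/
theorem pc_E' (hl : ∀ I : Ideal R, I.IsPrincipal) (hr : ∀ I : Ideal Rᵐᵒᵖ, I.IsPrincipal)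
    {p : R} (hp : pc_Atom p) :
    ∀ b : R, pc_Inv b → ∀ x, (∃ r, x = p * b * r) ↔ (∃ r, x = b * p * r) := by
  haveI : IsPrincipalIdealRing Rᵐᵒᵖ := ⟨hr⟩
  have wfO : WellFounded ((· > ·) : Ideal Rᵐᵒᵖ → Ideal Rᵐᵒᵖ → Prop) :=
    (inferInstance : WellFoundedGT (Ideal Rᵐᵒᵖ)).wf
  have wfR : WellFounded (fun b₁ b : R => pc_ridOp b < pc_ridOp b₁) := InvImage.wf pc_ridOp wfO
  intro b
  induction b using WellFounded.induction wfR with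
  | _ b IH =>
  intro hb x
  by_cases hb0 : b = 0
  · subst hb0
    constructor
    · rintro ⟨r, hrr⟩; exact ⟨r, by rw [hrr]; simp⟩
    · rintro ⟨r, hrr⟩; exact ⟨r, by rw [hrr]; simp⟩
  by_cases hbu : IsUnit b
  · obtain ⟨u, rfl⟩ := hbu
    constructor
    · rintro ⟨r, hrr⟩
      obtain ⟨d, hd⟩ := (hp.1 ((u⁻¹ : Rˣ) : R)).1   -- ↑u⁻¹ * p = p * d
      refine ⟨d * (↑u * r), ?_⟩
      rw [hrr, mul_assoc (u : R) p _, ← mul_assoc p d _, ← hd,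
        mul_assoc ((u⁻¹ : Rˣ) : R) p _, ← mul_assoc (u : R) _ _, Units.mul_inv, one_mul,
        ← mul_assoc]
    · rintro ⟨r, hrr⟩
      obtain ⟨s, hs⟩ := (hp.1 (u : R)).1   -- ↑u * p = p * s
      refine ⟨((u⁻¹ : Rˣ) : R) * (s * r), ?_⟩
      rw [hrr, mul_assoc p (u : R) _, ← mul_assoc (u : R) _ _, Units.mul_inv, one_mul,
        hs, mul_assoc]
  · obtain ⟨q, b₁, hq, hb₁, hfac, hstrict⟩ := pc_peel hl hr hb hb0 hbu
    have hrel : pc_ridOp b < pc_ridOp b₁ := pc_rel_of_peel hb₁ hfac hstrict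
    have IH₁ := IH b₁ hrel hb₁
    constructor
    · rintro ⟨r, hrr⟩
      obtain ⟨c, hc⟩ := (pc_atom_comm hp hq (p * q)).mp ⟨1, (mul_one _).symm⟩ -- p*q = q*p*c
      obtain ⟨c₂, hc2⟩ := (hb₁ c).1    -- c * b₁ = b₁ * c₂
      obtain ⟨s, hs⟩ := (IH₁ (p * b₁ * (c₂ * r))).mp ⟨c₂ * r, rfl⟩ -- = b₁ * p * s
      refine ⟨s, ?_⟩
      calc x = p * b * r := hrr
      _ = p * q * (b₁ * r) := by rw [hfac]; simp only [mul_assoc]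
      _ = q * p * c * (b₁ * r) := by rw [hc]
      _ = q * p * (c * b₁) * r := by simp only [mul_assoc]
      _ = q * (p * b₁ * (c₂ * r)) := by rw [hc2]; simp only [mul_assoc]
      _ = q * (b₁ * p * s) := by rw [hs]
      _ = b * p * s := by rw [hfac]; simp only [mul_assoc]
    · rintro ⟨r, hrr⟩
      obtain ⟨s, hs⟩ := (IH₁ (b₁ * p * r)).mpr ⟨r, rfl⟩   -- b₁ * p * r = p * b₁ * s
      obtain ⟨c, hc⟩ := (pc_atom_comm hp hq (q * p)).mpr ⟨1, (mul_one _).symm⟩ -- q*p = p*q*c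
      obtain ⟨c₂, hc2⟩ := (hb₁ c).1    -- c * b₁ = b₁ * c₂
      refine ⟨c₂ * s, ?_⟩
      calc x = b * p * r := hrr
      _ = q * (b₁ * p * r) := by rw [hfac]; simp only [mul_assoc]
      _ = q * (p * b₁ * s) := by rw [hs]
      _ = q * p * (b₁ * s) := by simp only [mul_assoc]
      _ = p * q * (c * b₁) * s := by rw [hc]; simp only [mul_assoc]
      _ = p * b * (c₂ * s) := by rw [hc2, hfac]; simp only [mul_assoc]

/-- Invariant elements commute up to right associates: `abR = baR`. -/
theorem pc_E (hl : ∀ I : Ideal R, I.IsPrincipal) (hr : ∀ I : Ideal Rᵐᵒᵖ, I.IsPrincipal) :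
    ∀ a : R, pc_Inv a → ∀ b : R, pc_Inv b → ∀ x,
      (∃ r, x = a * b * r) ↔ (∃ r, x = b * a * r) := by
  haveI : IsPrincipalIdealRing Rᵐᵒᵖ := ⟨hr⟩
  have wfO : WellFounded ((· > ·) : Ideal Rᵐᵒᵖ → Ideal Rᵐᵒᵖ → Prop) :=
    (inferInstance : WellFoundedGT (Ideal Rᵐᵒᵖ)).wf
  have wfR : WellFounded (fun b₁ b : R => pc_ridOp b < pc_ridOp b₁) := InvImage.wf pc_ridOp wfO
  intro a
  induction a using WellFounded.induction wfR with
  | _ a IH =>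
  intro ha b hb x
  by_cases ha0 : a = 0
  · subst ha0
    constructor
    · rintro ⟨r, hrr⟩; exact ⟨r, by rw [hrr]; simp⟩
    · rintro ⟨r, hrr⟩; exact ⟨r, by rw [hrr]; simp⟩
  by_cases hau : IsUnit a
  · obtain ⟨u, rfl⟩ := hau
    constructor
    · rintro ⟨r, hrr⟩
      obtain ⟨s, hs⟩ := (hb (u : R)).1   -- ↑u * b = b * s
      refine ⟨((u⁻¹ : Rˣ) : R) * (s * r), ?_⟩
      rw [hrr, mul_assoc b (u : R) _, ← mul_assoc (u : R) _ _, Units.mul_inv, one_mul,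
        hs, mul_assoc]
    · rintro ⟨r, hrr⟩
      obtain ⟨d, hd⟩ := (hb ((u⁻¹ : Rˣ) : R)).1   -- ↑u⁻¹ * b = b * d
      refine ⟨d * (↑u * r), ?_⟩
      rw [hrr, mul_assoc (u : R) b _, ← mul_assoc b d _, ← hd,
        mul_assoc ((u⁻¹ : Rˣ) : R) b _, ← mul_assoc (u : R) _ _, Units.mul_inv, one_mul,
        ← mul_assoc]
  · obtain ⟨p, a₁, hp, ha₁, hfac, hstrict⟩ := pc_peel hl hr ha ha0 hau
    have hrel : pc_ridOp a < pc_ridOp a₁ := pc_rel_of_peel ha₁ hfac hstrict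
    have IH₁ := IH a₁ hrel ha₁ b hb
    constructor
    · rintro ⟨r, hrr⟩
      obtain ⟨s, hs⟩ := (IH₁ (a₁ * b * r)).mp ⟨r, rfl⟩   -- a₁ * b * r = b * a₁ * s
      obtain ⟨c, hc⟩ := (pc_E' hl hr hp b hb (p * b)).mp ⟨1, (mul_one _).symm⟩ -- p*b = b*p*c
      obtain ⟨c₂, hc2⟩ := (ha₁ c).1    -- c * a₁ = a₁ * c₂
      refine ⟨c₂ * s, ?_⟩
      calc x = a * b * r := hrr
      _ = p * (a₁ * b * r) := by rw [hfac]; simp only [mul_assoc]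
      _ = p * (b * a₁ * s) := by rw [hs]
      _ = p * b * (a₁ * s) := by simp only [mul_assoc]
      _ = b * p * (c * a₁) * s := by rw [hc]; simp only [mul_assoc]
      _ = b * a * (c₂ * s) := by rw [hc2, hfac]; simp only [mul_assoc]
    · rintro ⟨r, hrr⟩
      obtain ⟨c, hc⟩ := (pc_E' hl hr hp b hb (b * p)).mpr ⟨1, (mul_one _).symm⟩ -- b*p = p*b*c
      obtain ⟨c₂, hc2⟩ := (ha₁ c).1    -- c * a₁ = a₁ * c₂
      obtain ⟨s, hs⟩ := (IH₁ (b * a₁ * (c₂ * r))).mpr ⟨c₂ * r, rfl⟩  -- = a₁ * b * s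
      refine ⟨s, ?_⟩
      calc x = b * a * r := hrr
      _ = b * p * (a₁ * r) := by rw [hfac]; simp only [mul_assoc]
      _ = p * b * c * (a₁ * r) := by rw [hc]
      _ = p * b * (c * a₁) * r := by simp only [mul_assoc]
      _ = p * (b * a₁ * (c₂ * r)) := by rw [hc2]; simp only [mul_assoc]
      _ = p * (a₁ * b * s) := by rw [hs]
      _ = a * b * s := by rw [hfac]; simp only [mul_assoc]

open Pointwise in
/-- Carrier of the ideal product of two invariantly generated two-sided ideals. -/
theorem pc_tmul_mem {a b : R} (ha : pc_Inv a) (hb : pc_Inv b) (A B : TwoSidedIdeal R)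
    (hA : ∀ x, x ∈ A ↔ ∃ r, x = a * r) (hB : ∀ x, x ∈ B ↔ ∃ r, x = b * r) :
    ∀ x, x ∈ TwoSidedIdeal.span ((A : Set R) * (B : Set R)) ↔ ∃ r, x = a * b * r := by
  have hab : pc_Inv (a * b) := pc_inv_mul ha hb
  set C := pc_rid (a * b) hab with hC
  intro x
  constructor
  · intro hx
    have := TwoSidedIdeal.mem_span_iff.mp hx C ?_
    · obtain ⟨r, hrr⟩ := (pc_mem_rid hab).mp this
      exact ⟨r, by rw [hrr, mul_assoc]⟩
    · rintro y hy
      rw [Set.mem_mul] at hy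
      obtain ⟨u, hu, v, hv, huv⟩ := hy
      obtain ⟨r, hru⟩ := (hA u).mp hu
      obtain ⟨s, hsv⟩ := (hB v).mp hv
      obtain ⟨r₂, hr2⟩ := (hb r).1     -- r * b = b * r₂
      rw [SetLike.mem_coe]
      refine (pc_mem_rid hab).mpr ⟨r₂ * s, ?_⟩
      rw [← huv, hru, hsv]
      calc a * r * (b * s) = a * (r * b) * s := by simp only [mul_assoc]
      _ = a * b * (r₂ * s) := by rw [hr2]; simp only [mul_assoc]
  · rintro ⟨r, hrr⟩
    have h1 : a ∈ (A : Set R) := (hA a).mpr ⟨1, (mul_one a).symm⟩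
    have h2 : b * r ∈ (B : Set R) := (hB _).mpr ⟨r, rfl⟩
    have h3 : a * (b * r) ∈ (A : Set R) * (B : Set R) := Set.mul_mem_mul h1 h2
    have h4 := TwoSidedIdeal.subset_span h3
    rw [SetLike.mem_coe] at h4
    have : x = a * (b * r) := by rw [hrr, mul_assoc]
    rwa [this]


end PidCiAux

/-- In a (possibly noncommutative) principal ideal domain — a domain in which every
left ideal and every right ideal is principal — any two two-sided ideals commute. -/
theorem pid_is_ci {R : Type*} [Ring R] [IsDomain R]
    (hleft : ∀ I : Ideal R, I.IsPrincipal)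
    (hright : ∀ I : Ideal Rᵐᵒᵖ, I.IsPrincipal) :
    ∀ A B : TwoSidedIdeal R, tmul A B = tmul B A := by
  intro A B
  obtain ⟨a, ha, hA⟩ := pc_gen hleft hright A
  obtain ⟨b, hb, hB⟩ := pc_gen hleft hright B
  have e1 := pc_tmul_mem ha hb A B hA hB
  have e2 := pc_tmul_mem hb ha B A hB hA
  apply TwoSidedIdeal.ext
  intro x
  constructor
  · intro h
    exact (e2 x).mpr ((pc_E hleft hright a ha b hb x).mp ((e1 x).mp h))
  · intro h
    exact (e1 x).mpr ((pc_E hleft hright a ha b hb x).mpr ((e2 x).mp h))
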